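/- Let f : ℝⁿ → ℝⁿ, and let x : ℝ → ℝⁿ, x⋆ : ℝ → ℝⁿ, z : ℝ → ℝⁿ, τ : ℝ → ℝ be functions. Fix t₀ ∈ ℝ and set τ₀ = τ(t₀). Assume: (i) x is differentiable at t₀ with x′(t₀) = f(x(t₀)); (ii) τ is differentiable at t₀; (iii) x⋆ is differentiable at τ₀ with (x⋆)′(τ₀) = f(x⋆(τ₀)); (iv) z is differentiable at τ₀; (v) the orthogonality condition ⟨z(τ(t)), x(t) − x⋆(τ(t))⟩ = 0 holds for all t in a neighborhood of t₀; (vi) the quantity d := ⟨z(τ₀), f(x⋆(τ₀))⟩ − ⟨z′(τ₀), x(t₀) − x⋆(τ₀)⟩ is nonzero. Then τ′(t₀) = ⟨z(τ₀), f(x(t₀))⟩ / d. -/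

import Mathlib

open scoped RealInnerProductSpace

/-- The formula for `τ̇` in Theorem 1 (equation (14)) of the paper: if `x` solves
`ẋ = f(x)`, `x⋆` is a solution of the same system, and the phase `τ(t)` satisfies the
orthogonality condition `⟪z(τ(t)), x(t) − x⋆(τ(t))⟫ = 0` near `t₀`, then, provided the
denominator `d` is nonzero,
`τ′(t₀) = ⟪z(τ₀), f(x(t₀))⟫ / (⟪z(τ₀), f(x⋆(τ₀))⟫ − ⟪z′(τ₀), x(t₀) − x⋆(τ₀)⟫)`. -/
theorem phase_derivative_formula
    (n : ℕ) (f : EuclideanSpace ℝ (Fin n) → EuclideanSpace ℝ (Fin n))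
    (x xstar z : ℝ → EuclideanSpace ℝ (Fin n)) (τ : ℝ → ℝ)
    (t₀ τ₀ : ℝ) (hτ₀ : τ₀ = τ t₀)
    (hx : HasDerivAt x (f (x t₀)) t₀)
    (hτ : DifferentiableAt ℝ τ t₀)
    (hxs : HasDerivAt xstar (f (xstar τ₀)) τ₀)
    (zdot : EuclideanSpace ℝ (Fin n)) (hz : HasDerivAt z zdot τ₀)
    (horth : ∀ᶠ t in nhds t₀, ⟪z (τ t), x t - xstar (τ t)⟫ = 0)
    (d : ℝ) (hd : d = ⟪z τ₀, f (xstar τ₀)⟫ - ⟪zdot, x t₀ - xstar τ₀⟫)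
    (hdne : d ≠ 0) :
    deriv τ t₀ = ⟪z τ₀, f (x t₀)⟫ / d := by
  set τ' := deriv τ t₀ with hτ'
  have hτd : HasDerivAt τ τ' t₀ := hτ.hasDerivAt
  subst hτ₀
  have hzc : HasDerivAt (fun t => z (τ t)) (τ' • zdot) t₀ := by
    exact (hz.scomp t₀ hτd)
  have hxsc : HasDerivAt (fun t => xstar (τ t)) (τ' • f (xstar (τ t₀))) t₀ := by
    exact (hxs.scomp t₀ hτd)
  have hdiff : HasDerivAt (fun t => x t - xstar (τ t)) (f (x t₀) - τ' • f (xstar (τ t₀))) t₀ :=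
    hx.sub hxsc
  have hD : HasDerivAt (fun t => ⟪z (τ t), x t - xstar (τ t)⟫)
      (⟪z (τ t₀), f (x t₀) - τ' • f (xstar (τ t₀))⟫ + ⟪τ' • zdot, x t₀ - xstar (τ t₀)⟫) t₀ :=
    hzc.inner ℝ hdiff
  have hD0 : HasDerivAt (fun t => ⟪z (τ t), x t - xstar (τ t)⟫) 0 t₀ := by
    have : HasDerivAt (fun _ : ℝ => (0 : ℝ)) 0 t₀ := hasDerivAt_const _ _
    exact this.congr_of_eventuallyEq (horth.mono fun t ht => ht)
  have heq : ⟪z (τ t₀), f (x t₀) - τ' • f (xstar (τ t₀))⟫ + ⟪τ' • zdot, x t₀ - xstar (τ t₀)⟫ = 0 :=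
    hD.unique hD0
  rw [inner_sub_right, inner_smul_right, inner_smul_left] at heq
  simp only [RCLike.star_def, conj_trivial] at heq
  rw [eq_div_iff hdne, hd]
  nlinarith [heq]
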